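/- For a complete array of paired comparisons (every r_{ij}^p defined for i ≠ j and all p), the generalized row sum solution satisfies x_i = s_i for every ε ≥ 0, where s_i = ∑_{(k,p)} r_{ik}^p is the ordinary row sum. -/
import Mathlib


open scoped Classical

/-- An array of `m` incomplete paired comparison `n × n` matrices with entries in
`[rmin, rmax]`: `defined p i j` says that the entry `r_{ij}^p` is defined, in
which case its value is `val p i j`. -/
structure Profile (rmin rmax : ℝ) (n m : ℕ) where
  defined : Fin m → Fin n → Fin n → Prop
  val : Fin m → Fin n → Fin n → ℝ
  defined_symm : ∀ p i j, defined p i j → defined p j i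
  defined_irrefl : ∀ p i, ¬ defined p i i
  val_mem : ∀ p i j, defined p i j → rmin ≤ val p i j ∧ val p i j ≤ rmax

/-- For a complete skew-symmetric array (every `r_{ij}^p` with `i ≠ j` defined),
the generalized row sum solution coincides with the ordinary row sums
`sᵢ = ∑_{(k,p)} r_{ik}^p` for every `ε ≥ 0`. -/
theorem stmt17 (n m : ℕ) (rmax : ℝ) (P : Profile (-rmax) rmax n m)
    (hcomplete : ∀ p (i j : Fin n), i ≠ j → P.defined p i j)
    (hskew : ∀ p i j, P.defined p i j → P.val p j i = -P.val p i j)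
    (ε : ℝ) (hε : 0 ≤ ε) (x : Fin n → ℝ)
    (hx : ∀ i, x i = ∑ k, ∑ p, if P.defined p i k then
      P.val p i k + ε * (x k - x i + P.val p i k * (m : ℝ) * (n : ℝ)) else 0) :
    ∀ i, x i = ∑ k, ∑ p, if P.defined p i k then P.val p i k else 0 := by
  classical
  set s : Fin n → ℝ := fun i => ∑ k, ∑ p, if P.defined p i k then P.val p i k else 0 with hsdef
  have key : ∀ i, x i = (1 + ε * m * n) * s i
      + ε * (m * ((∑ k, x k) - n * x i)) := by
    intro i
    conv_lhs => rw [hx i]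
    have hterm : ∀ k p, (if P.defined p i k then
        P.val p i k + ε * (x k - x i + P.val p i k * (m : ℝ) * (n : ℝ)) else 0)
        = (1 + ε * m * n) * (if P.defined p i k then P.val p i k else 0)
          + ε * (x k - x i) := by
      intro k p
      by_cases h : P.defined p i k
      · simp only [if_pos h]; ring
      · have hk : k = i := by
          by_contra hk
          exact h (hcomplete p i k (Ne.symm hk))
        subst hk
        simp [h]
    calc ∑ k, ∑ p, (if P.defined p i k then
          P.val p i k + ε * (x k - x i + P.val p i k * (m : ℝ) * (n : ℝ)) else 0)
        = ∑ k, ∑ p : Fin m, ((1 + ε * m * n) * (if P.defined p i k then P.val p i k else 0)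
          + ε * (x k - x i)) := by
          refine Finset.sum_congr rfl fun k _ => Finset.sum_congr rfl fun p _ => hterm k p
      _ = (1 + ε * m * n) * s i + ε * (m * ((∑ k, x k) - n * x i)) := by
          simp only [Finset.sum_add_distrib, ← Finset.mul_sum, Finset.sum_const,
            Finset.card_univ, Fintype.card_fin, nsmul_eq_mul, hsdef]
          rw [Finset.sum_sub_distrib]
          simp only [Finset.sum_const, Finset.card_univ, Fintype.card_fin, nsmul_eq_mul]
          try push_cast
          try ring
  have hs0 : ∑ i, s i = 0 := by
    have h1 : ∑ i, s i = ∑ i, ∑ k, ∑ p, (if P.defined p k i then P.val p k i else 0) := by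
      rw [hsdef]
      exact Finset.sum_comm
    have h2 : ∀ i k (p : Fin m), (if P.defined p k i then P.val p k i else 0)
        = -(if P.defined p i k then P.val p i k else 0) := by
      intro i k p
      by_cases h : P.defined p i k
      · rw [if_pos h, if_pos (P.defined_symm p i k h), hskew p i k h]
      · rw [if_neg h, if_neg (fun h' => h (P.defined_symm p k i h')), neg_zero]
    have h3 : ∑ i, s i = -∑ i, s i := by
      nth_rewrite 1 [h1]
      rw [← Finset.sum_neg_distrib]
      refine Finset.sum_congr rfl fun i _ => ?_
      simp only [hsdef]
      rw [← Finset.sum_neg_distrib]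
      refine Finset.sum_congr rfl fun k _ => ?_
      rw [← Finset.sum_neg_distrib]
      exact Finset.sum_congr rfl fun p _ => h2 i k p
    linarith
  have hT : ∑ i, x i = 0 := by
    have h4 : ∑ i, x i = ∑ i, ((1 + ε * m * n) * s i
        + ε * (m * ((∑ k, x k) - n * x i))) :=
      Finset.sum_congr rfl fun i _ => key i
    rw [Finset.sum_add_distrib, ← Finset.mul_sum, hs0, mul_zero, zero_add,
      ← Finset.mul_sum] at h4
    have h5 : ∑ i : Fin n, (m:ℝ) * ((∑ k, x k) - n * x i) = 0 := by
      rw [← Finset.mul_sum, Finset.sum_sub_distrib, Finset.sum_const, Finset.card_univ,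
        Fintype.card_fin, nsmul_eq_mul, ← Finset.mul_sum]
      ring
    rw [h5, mul_zero] at h4
    exact h4
  intro i
  have h6 := key i
  rw [hT] at h6
  have h7 : (1 + ε * m * n) * (x i - s i) = 0 := by linear_combination h6
  have h8 : (0:ℝ) < 1 + ε * m * n := by positivity
  have h9 : x i - s i = 0 := by
    rcases mul_eq_zero.mp h7 with h | h
    · exact absurd h h8.ne'
    · exact h
  have hxs : x i = s i := by linarith
  simpa [hsdef] using hxs
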